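/- Let X and Y be topological spaces and f : X × Y → [−∞, +∞] with Δ_f = 0 and V_f, W_f finite. Then the saddle point problem for f is well-posed if and only if the supinf problem for f is sup-well-posed and the infsup problem for f is inf-well-posed. -/
import Mathlib


open Filter Topology BoundedContinuousFunction

/-- `v_f(x) = inf_{y ∈ Y} f(x,y)`. -/
noncomputable def vmin {X Y : Type*} (f : X → Y → EReal) (x : X) : EReal := ⨅ y, f x y

/-- `w_f(y) = sup_{x ∈ X} f(x,y)`. -/
noncomputable def wmax {X Y : Type*} (f : X → Y → EReal) (y : Y) : EReal := ⨆ x, f x y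

/-- `V_f = sup_{x ∈ X} v_f(x)`, the optimal value of the supinf problem. -/
noncomputable def Vval {X Y : Type*} (f : X → Y → EReal) : EReal := ⨆ x, vmin f x

/-- `W_f = inf_{y ∈ Y} w_f(y)`, the optimal value of the infsup problem. -/
noncomputable def Wval {X Y : Type*} (f : X → Y → EReal) : EReal := ⨅ y, wmax f y

/-- (A1): for any `y ∈ Y` the function `f(·, y)` is upper semicontinuous. -/
def CondA1 {X Y : Type*} [TopologicalSpace X] (f : X → Y → EReal) : Prop :=
  ∀ y : Y, UpperSemicontinuous fun x => f x y

/-- (A2): `v_f` is bounded above on `X` and proper as a function with values in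
`ℝ ∪ {-∞}` (i.e. finite at some point). -/
def CondA2 {X Y : Type*} (f : X → Y → EReal) : Prop :=
  (∃ M : ℝ, ∀ x, vmin f x ≤ (M : EReal)) ∧ ∃ x, vmin f x ≠ ⊥

/-- (A3): for any `x ∈ X` the function `f(x, ·)` is lower semicontinuous. -/
def CondA3 {X Y : Type*} [TopologicalSpace Y] (f : X → Y → EReal) : Prop :=
  ∀ x : X, LowerSemicontinuous fun y => f x y

/-- (A4): `w_f` is bounded below on `Y` and proper as a function with values in
`ℝ ∪ {+∞}` (i.e. finite at some point). -/
def CondA4 {X Y : Type*} (f : X → Y → EReal) : Prop :=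
  (∃ m : ℝ, ∀ y, (m : EReal) ≤ wmax f y) ∧ ∃ y, wmax f y ≠ ⊤

/-- `(x₀, y₀)` is a solution of the supinf problem for `f`:
`f(x₀,y₀) = inf_y f(x₀,y) = sup_x inf_y f(x,y)`. -/
def SupinfSol {X Y : Type*} (f : X → Y → EReal) (x₀ : X) (y₀ : Y) : Prop :=
  f x₀ y₀ = vmin f x₀ ∧ vmin f x₀ = Vval f

/-- `(x₀, y₀)` is a solution of the infsup problem for `f`:
`f(x₀,y₀) = sup_x f(x,y₀) = inf_y sup_x f(x,y)`. -/
def InfsupSol {X Y : Type*} (f : X → Y → EReal) (x₀ : X) (y₀ : Y) : Prop :=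
  f x₀ y₀ = wmax f y₀ ∧ wmax f y₀ = Wval f

/-- `(x₀, y₀)` is a saddle point of `f` on `X × Y`:
`f(x,y₀) ≤ f(x₀,y₀) ≤ f(x₀,y)` for all `x ∈ X`, `y ∈ Y`. -/
def SaddlePt {X Y : Type*} (f : X → Y → EReal) (x₀ : X) (y₀ : Y) : Prop :=
  ∀ (x : X) (y : Y), f x y₀ ≤ f x₀ y₀ ∧ f x₀ y₀ ≤ f x₀ y

/-- `{(xₙ, yₙ)}` is an optimizing sequence for the saddle point problem for `f`:
`v_f(xₙ) → V_f`, `w_f(yₙ) → W_f` and `Δ_f = 0`. -/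
def OptimizingSeq {X Y : Type*} (f : X → Y → EReal) (x : ℕ → X) (y : ℕ → Y) : Prop :=
  Tendsto (fun n => vmin f (x n)) atTop (𝓝 (Vval f)) ∧
  Tendsto (fun n => wmax f (y n)) atTop (𝓝 (Wval f)) ∧
  Wval f - Vval f = 0

/-- The supinf problem for `f` is sup-well-posed with (unique) sup-solution `x₀`:
the problem `sup_X v_f` is well-posed with solution `x₀`. -/
def SupWellPosedAt {X Y : Type*} [TopologicalSpace X] (f : X → Y → EReal) (x₀ : X) : Prop :=
  vmin f x₀ = Vval f ∧ (∀ x, vmin f x = Vval f → x = x₀) ∧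
  ∀ u : ℕ → X, Tendsto (fun n => vmin f (u n)) atTop (𝓝 (Vval f)) →
    Tendsto u atTop (𝓝 x₀)

/-- The infsup problem for `f` is inf-well-posed with (unique) inf-solution `y₀`:
the problem `inf_Y w_f` is well-posed with solution `y₀`. -/
def InfWellPosedAt {X Y : Type*} [TopologicalSpace Y] (f : X → Y → EReal) (y₀ : Y) : Prop :=
  wmax f y₀ = Wval f ∧ (∀ y, wmax f y = Wval f → y = y₀) ∧
  ∀ u : ℕ → Y, Tendsto (fun n => wmax f (u n)) atTop (𝓝 (Wval f)) →
    Tendsto u atTop (𝓝 y₀)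

/-- The saddle point problem for `f` is well-posed with unique solution `(x₀,y₀)`:
`(x₀,y₀)` is the unique saddle point of `f` and every optimizing sequence for the
saddle point problem converges to `(x₀,y₀)`. -/
def SPWellPosedAt {X Y : Type*} [TopologicalSpace X] [TopologicalSpace Y]
    (f : X → Y → EReal) (x₀ : X) (y₀ : Y) : Prop :=
  SaddlePt f x₀ y₀ ∧ (∀ x y, SaddlePt f x y → x = x₀ ∧ y = y₀) ∧
  ∀ (x : ℕ → X) (y : ℕ → Y), OptimizingSeq f x y →
    Tendsto (fun n => (x n, y n)) atTop (𝓝 (x₀, y₀))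

/-- The saddle point problem for `f` is well-posed. -/
def SPWellPosed {X Y : Type*} [TopologicalSpace X] [TopologicalSpace Y]
    (f : X → Y → EReal) : Prop :=
  ∃ x₀ y₀, SPWellPosedAt f x₀ y₀

/-- The saddle point problem for `f` is well-posed iff the supinf problem is
sup-well-posed and the infsup problem is inf-well-posed (given `Δ_f = 0` and
`V_f`, `W_f` finite). -/
theorem spWellPosed_iff_supWellPosed_and_infWellPosed
    {X Y : Type*} [TopologicalSpace X] [TopologicalSpace Y]
    (f : X → Y → EReal) (hΔ : Wval f - Vval f = 0)
    (hV : Vval f ≠ ⊥ ∧ Vval f ≠ ⊤) (hW : Wval f ≠ ⊥ ∧ Wval f ≠ ⊤) :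
    SPWellPosed f ↔ (∃ x₀, SupWellPosedAt f x₀) ∧ (∃ y₀, InfWellPosedAt f y₀) := by
  obtain ⟨v, hv⟩ : ∃ v : ℝ, Vval f = v := ⟨_, (EReal.coe_toReal hV.2 hV.1).symm⟩
  obtain ⟨w, hw⟩ : ∃ w : ℝ, Wval f = w := ⟨_, (EReal.coe_toReal hW.2 hW.1).symm⟩
  have hE : Wval f = Vval f := by
    rw [hv, hw] at hΔ ⊢
    rw [← EReal.coe_sub] at hΔ
    norm_cast at hΔ ⊢
    linarith
  have hvle : ∀ x, vmin f x ≤ Vval f := fun x => le_iSup _ x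
  have hwge : ∀ y, Wval f ≤ wmax f y := fun y => iInf_le _ y
  have hv_le_f : ∀ x y, vmin f x ≤ f x y := fun x y => iInf_le _ y
  have hf_le_w : ∀ x y, f x y ≤ wmax f y := fun x y => le_iSup (fun x' => f x' y) x
  have saddle_iff : ∀ x y, SaddlePt f x y ↔ (vmin f x = Vval f ∧ wmax f y = Wval f) := by
    intro x y
    constructor
    · intro h
      have h1 : wmax f y ≤ f x y := iSup_le fun x' => (h x' y).1
      have h2 : f x y ≤ vmin f x := le_iInf fun y' => (h x y').2
      have hVv : Vval f ≤ vmin f x :=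
        calc Vval f = Wval f := hE.symm
        _ ≤ wmax f y := hwge y
        _ ≤ f x y := h1
        _ ≤ vmin f x := h2
      have hx : vmin f x = Vval f := le_antisymm (hvle x) hVv
      have hwW : wmax f y ≤ Wval f :=
        calc wmax f y ≤ f x y := h1
        _ ≤ vmin f x := h2
        _ ≤ Vval f := hvle x
        _ = Wval f := hE.symm
      exact ⟨hx, le_antisymm hwW (hwge y)⟩
    · rintro ⟨hx, hy⟩
      have hf : f x y = Vval f := by
        apply le_antisymm
        · calc f x y ≤ wmax f y := hf_le_w x y
          _ = Wval f := hy
          _ = Vval f := hE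
        · calc Vval f = vmin f x := hx.symm
          _ ≤ f x y := hv_le_f x y
      intro x' y'
      constructor
      · calc f x' y ≤ wmax f y := hf_le_w x' y
        _ = Wval f := hy
        _ = Vval f := hE
        _ = f x y := hf.symm
      · calc f x y = Vval f := hf
        _ = vmin f x := hx.symm
        _ ≤ f x y' := hv_le_f x y'
  constructor
  · rintro ⟨x₀, y₀, hsp, huniq, hconv⟩
    have hs := (saddle_iff x₀ y₀).1 hsp
    refine ⟨⟨x₀, hs.1, ?_, ?_⟩, ⟨y₀, hs.2, ?_, ?_⟩⟩
    · intro x hx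
      exact (huniq x y₀ ((saddle_iff x y₀).2 ⟨hx, hs.2⟩)).1
    · intro u hu
      have h := hconv u (fun _ => y₀) ⟨hu, by simp only [hs.2]; exact tendsto_const_nhds, hΔ⟩
      exact (continuous_fst.tendsto _).comp h
    · intro y hy
      exact (huniq x₀ y ((saddle_iff x₀ y).2 ⟨hs.1, hy⟩)).2
    · intro u hu
      have h := hconv (fun _ => x₀) u ⟨by simp only [hs.1]; exact tendsto_const_nhds, hu, hΔ⟩
      exact (continuous_snd.tendsto _).comp h
  · rintro ⟨⟨x₀, hx0, hxu, hxc⟩, ⟨y₀, hy0, hyu, hyc⟩⟩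
    refine ⟨x₀, y₀, (saddle_iff x₀ y₀).2 ⟨hx0, hy0⟩, ?_, ?_⟩
    · intro x y hsxy
      have h := (saddle_iff x y).1 hsxy
      exact ⟨hxu x h.1, hyu y h.2⟩
    · rintro x y ⟨hx, hy, -⟩
      exact (hxc x hx).prodMk_nhds (hyc y hy)
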